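/- Let X be a random variable uniform on {0,1}, Z a random variable in {0,1,⊥}, and L another random variable, all on a finite probability space. Define q(l) = Pr(Z ≠ ⊥ | L = l), q = Pr(Z ≠ ⊥), ε(l) = Pr(Z ≠ ⊥ and Z ≠ X | L = l), ε = Pr(Z ≠ ⊥ and Z ≠ X). Then H(X | Z, L) ≤ 1 − q·(1 − H2(ε/q)) whenever q > 0 (and H(X | Z, L) ≤ 1 if q = 0). -/

import Mathlib

open Finset Real
open scoped Classical

/-- Probability of an event under a weight function on a finite sample space. -/
noncomputable def pr {Ω : Type*} [Fintype Ω] (μ : Ω → ℝ) (E : Ω → Prop) : ℝ :=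
  ∑ ω, if E ω then μ ω else 0

/-- Shannon entropy (base 2) of a random variable on a finite probability space. -/
noncomputable def ent {Ω α : Type*} [Fintype Ω] [Fintype α]
    (μ : Ω → ℝ) (X : Ω → α) : ℝ :=
  -∑ a : α, pr μ (fun ω => X ω = a) * Real.logb 2 (pr μ (fun ω => X ω = a))

/-- Conditional Shannon entropy H(X | Y) (base 2). -/
noncomputable def condEnt {Ω α β : Type*} [Fintype Ω] [Fintype α] [Fintype β]
    (μ : Ω → ℝ) (X : Ω → α) (Y : Ω → β) : ℝ :=
  -∑ a : α, ∑ b : β,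
    pr μ (fun ω => X ω = a ∧ Y ω = b) *
      Real.logb 2 (pr μ (fun ω => X ω = a ∧ Y ω = b) / pr μ (fun ω => Y ω = b))

/-- Conditional mutual information I(X : Y | Z) = H(X|Z) - H(X|Y,Z). -/
noncomputable def condMI {Ω α β γ : Type*} [Fintype Ω] [Fintype α] [Fintype β] [Fintype γ]
    (μ : Ω → ℝ) (X : Ω → α) (Y : Ω → β) (Z : Ω → γ) : ℝ :=
  condEnt μ X Z - condEnt μ X (fun ω => (Y ω, Z ω))

/-- Mutual information I(X : Y) = H(X) - H(X|Y). -/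
noncomputable def mutInf {Ω α β : Type*} [Fintype Ω] [Fintype α] [Fintype β]
    (μ : Ω → ℝ) (X : Ω → α) (Y : Ω → β) : ℝ :=
  ent μ X - condEnt μ X Y

/-- Binary entropy function (base 2). -/
noncomputable def H2 (x : ℝ) : ℝ := -x * Real.logb 2 x - (1 - x) * Real.logb 2 (1 - x)

/-- The prefix X[1..j] of a length-`n` bit string, encoded with `none` outside the prefix. -/
def prefOf {n : ℕ} (x : Fin n → Bool) (j : Fin (n+1)) : Fin n → Option Bool :=
  fun i => if (i : ℕ) < (j : ℕ) then some (x i) else none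

/-- The suffix X[j+1..n] of a length-`n` bit string, encoded with `none` inside the prefix. -/
def suffOf {n : ℕ} (x : Fin n → Bool) (j : Fin (n+1)) : Fin n → Option Bool :=
  fun i => if (j : ℕ) ≤ (i : ℕ) then some (x i) else none

section Aux

lemma H2_eq_binEntropy (x : ℝ) : H2 x = Real.binEntropy x / Real.log 2 := by
  unfold H2 Real.binEntropy
  rw [Real.log_inv, Real.log_inv, Real.logb, Real.logb]
  ring

lemma H2_le_one (x : ℝ) : H2 x ≤ 1 := by
  rw [H2_eq_binEntropy, div_le_one (Real.log_pos (by norm_num))]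
  exact Real.binEntropy_le_log_two

lemma H2_symm (x : ℝ) : H2 (1 - x) = H2 x := by
  unfold H2
  rw [sub_sub_cancel]
  ring

lemma concaveOn_H2 : ConcaveOn ℝ (Set.Icc (0:ℝ) 1) H2 := by
  have h := (Real.strictConcave_binEntropy.concaveOn).smul
    (c := (Real.log 2)⁻¹) (by positivity)
  have hH : H2 = fun x => (Real.log 2)⁻¹ • Real.binEntropy x := by
    funext x
    rw [H2_eq_binEntropy, smul_eq_mul, div_eq_inv_mul]
  rw [hH]
  exact h

variable {Ω : Type*} [Fintype Ω] {μ : Ω → ℝ}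

lemma pr_congr {E F : Ω → Prop} (h : ∀ ω, E ω ↔ F ω) : pr μ E = pr μ F :=
  Finset.sum_congr rfl fun ω _ => if_congr (h ω) rfl rfl

lemma pr_nonneg (hpos : ∀ ω, 0 ≤ μ ω) (E : Ω → Prop) : 0 ≤ pr μ E :=
  Finset.sum_nonneg fun ω _ => by split <;> [exact hpos ω; exact le_rfl]

lemma pr_mono (hpos : ∀ ω, 0 ≤ μ ω) {E F : Ω → Prop} (h : ∀ ω, E ω → F ω) :
    pr μ E ≤ pr μ F := by
  refine Finset.sum_le_sum fun ω _ => ?_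
  by_cases hE : E ω
  · simp [hE, h ω hE]
  · simp only [hE, if_false]
    split <;> [exact hpos ω; exact le_rfl]

lemma pr_add_not (hsum : ∑ ω, μ ω = 1) (E : Ω → Prop) :
    pr μ E + pr μ (fun ω => ¬ E ω) = 1 := by
  unfold pr
  rw [← Finset.sum_add_distrib, ← hsum]
  refine Finset.sum_congr rfl fun ω _ => ?_
  by_cases hE : E ω <;> simp [hE]

lemma pr_fiber_sum {β : Type*} [Fintype β] (W : Ω → β) (E : Ω → Prop) (S : β → Prop) [DecidablePred S] :
    ∑ w ∈ Finset.univ.filter (fun w => S w), pr μ (fun ω => E ω ∧ W ω = w)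
      = pr μ (fun ω => E ω ∧ S (W ω)) := by
  unfold pr
  rw [Finset.sum_comm]
  refine Finset.sum_congr rfl fun ω _ => ?_
  by_cases hE : E ω
  · simp only [hE, true_and]
    rw [Finset.sum_ite_eq]
    simp
  · simp [hE]

lemma pr_bool_split {β : Type*} [Fintype β] (hsum : ∑ ω, μ ω = 1) (X : Ω → Bool)
    (W : Ω → β) (w : β) :
    pr μ (fun ω => X ω = true ∧ W ω = w) + pr μ (fun ω => X ω = false ∧ W ω = w)
      = pr μ (fun ω => W ω = w) := by
  unfold pr
  rw [← Finset.sum_add_distrib]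
  refine Finset.sum_congr rfl fun ω _ => ?_
  cases hXω : X ω <;> by_cases hW : W ω = w <;> simp [hXω, hW]

/-- Per-cell identity: the cell's entropy contribution equals `s * H2 (p/s)`. -/
lemma cell_eq {p s : ℝ} (hp : 0 ≤ p) (hps : p ≤ s) :
    -(p * Real.logb 2 (p / s) + (s - p) * Real.logb 2 ((s - p) / s)) = s * H2 (p / s) := by
  rcases eq_or_lt_of_le (hp.trans hps) with hs | hs
  · have hp0 : p = 0 := le_antisymm (hps.trans hs.symm.le) hp
    simp [← hs, hp0]
  · have h1 : 1 - p / s = (s - p) / s := by field_simp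
    unfold H2
    rw [h1]
    field_simp
    ring

/-- The conditional entropy of a Bool-valued variable as a sum of per-cell terms. -/
lemma condEnt_bool_eq {β : Type*} [Fintype β] (hpos : ∀ ω, 0 ≤ μ ω)
    (hsum : ∑ ω, μ ω = 1) (X : Ω → Bool) (W : Ω → β) :
    condEnt μ X W = ∑ w : β, pr μ (fun ω => W ω = w) *
      H2 (pr μ (fun ω => X ω = true ∧ W ω = w) / pr μ (fun ω => W ω = w)) := by
  unfold condEnt
  rw [Fintype.sum_bool, neg_add, ← Finset.sum_neg_distrib, ← Finset.sum_neg_distrib,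
    ← Finset.sum_add_distrib]
  refine Finset.sum_congr rfl fun w _ => ?_
  have hsplit := pr_bool_split hsum X W w
  have hple : pr μ (fun ω => X ω = true ∧ W ω = w) ≤ pr μ (fun ω => W ω = w) :=
    pr_mono hpos fun ω h => h.2
  have := cell_eq (pr_nonneg hpos (fun ω => X ω = true ∧ W ω = w)) hple
  rw [show pr μ (fun ω => W ω = w) - pr μ (fun ω => X ω = true ∧ W ω = w)
      = pr μ (fun ω => X ω = false ∧ W ω = w) by linarith] at this
  rw [← this]
  ring

end Aux

theorem stmt8 {Ω γ : Type*} [Fintype Ω] [Fintype γ] (μ : Ω → ℝ)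
    (hpos : ∀ ω, 0 ≤ μ ω) (hsum : ∑ ω, μ ω = 1)
    (X : Ω → Bool) (Z : Ω → Option Bool) (L : Ω → γ)
    (hX : ∀ b, pr μ (fun ω => X ω = b) = 1/2) :
    (0 < pr μ (fun ω => Z ω ≠ none) →
      condEnt μ X (fun ω => (Z ω, L ω)) ≤
        1 - pr μ (fun ω => Z ω ≠ none) *
          (1 - H2 (pr μ (fun ω => Z ω ≠ none ∧ Z ω ≠ some (X ω))
                    / pr μ (fun ω => Z ω ≠ none)))) ∧
    (pr μ (fun ω => Z ω ≠ none) = 0 → condEnt μ X (fun ω => (Z ω, L ω)) ≤ 1) := by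
  classical
  set q := pr μ (fun ω => Z ω ≠ none) with hq_def
  set ε := pr μ (fun ω => Z ω ≠ none ∧ Z ω ≠ some (X ω)) with hε_def
  set W : Ω → Option Bool × γ := fun ω => (Z ω, L ω) with hW_def
  set pw : Option Bool × γ → ℝ := fun w => pr μ (fun ω => W ω = w) with hpw_def
  set pt : Option Bool × γ → ℝ := fun w => pr μ (fun ω => X ω = true ∧ W ω = w) with hpt_def
  set pe : Option Bool × γ → ℝ := fun w =>
    pr μ (fun ω => (Z ω ≠ none ∧ Z ω ≠ some (X ω)) ∧ W ω = w) with hpe_def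
  set e : Option Bool × γ → ℝ := fun w => pe w / pw w with he_def
  have hCE : condEnt μ X W = ∑ w : Option Bool × γ, pw w * H2 (pt w / pw w) :=
    condEnt_bool_eq hpos hsum X W
  have hpw_nonneg : ∀ w, 0 ≤ pw w := fun w => pr_nonneg hpos _
  have hpe_le : ∀ w, pe w ≤ pw w := fun w => pr_mono hpos fun ω h => h.2
  have hpe_nonneg : ∀ w, 0 ≤ pe w := fun w => pr_nonneg hpos _
  have hcell_le : ∀ w, pw w * H2 (pt w / pw w) ≤ pw w := fun w =>
    mul_le_of_le_one_right (hpw_nonneg w) (H2_le_one _)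
  have hall : ∑ w : Option Bool × γ, pw w = 1 := by
    have h := pr_fiber_sum (μ := μ) W (fun _ => True) (fun _ => True)
    simp only [Finset.filter_true, true_and] at h
    rw [h]
    unfold pr
    simpa using hsum
  constructor
  case right =>
    intro _
    rw [hCE]
    calc ∑ w : Option Bool × γ, pw w * H2 (pt w / pw w)
        ≤ ∑ w : Option Bool × γ, pw w := Finset.sum_le_sum fun w _ => hcell_le w
      _ = 1 := hall
  intro hq
  set t0 := Finset.univ.filter (fun w : Option Bool × γ => w.1 = none) with ht0
  set t1 := Finset.univ.filter (fun w : Option Bool × γ => ¬ w.1 = none) with ht1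
  -- sum over t0
  have hsum0 : ∑ w ∈ t0, pw w = 1 - q := by
    have h := pr_fiber_sum (μ := μ) W (fun _ => True) (fun w => w.1 = none)
    simp only [true_and] at h
    have h2 := pr_add_not (μ := μ) hsum (fun ω => Z ω = none)
    have h3 : pr μ (fun ω => (W ω).1 = none) = pr μ (fun ω => Z ω = none) :=
      pr_congr fun ω => Iff.rfl
    have h4 : pr μ (fun ω => ¬ Z ω = none) = q := pr_congr fun ω => Iff.rfl
    rw [ht0]
    simp only [hpw_def]
    rw [h, h3]
    linarith [h4 ▸ h2]
  have hbound0 : ∑ w ∈ t0, pw w * H2 (pt w / pw w) ≤ 1 - q := by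
    rw [← hsum0]
    exact Finset.sum_le_sum fun w _ => hcell_le w
  -- sum of weights over t1
  have hsum1 : ∑ w ∈ t1, pw w = q := by
    have h := pr_fiber_sum (μ := μ) W (fun _ => True) (fun w => ¬ w.1 = none)
    simp only [true_and] at h
    rw [ht1]
    simp only [hpw_def]
    rw [h]
  -- error mass over t1
  have hesum : ∑ w ∈ t1, pe w = ε := by
    have h := pr_fiber_sum (μ := μ) W
      (fun ω => Z ω ≠ none ∧ Z ω ≠ some (X ω)) (fun w => ¬ w.1 = none)
    rw [ht1]
    simp only [hpe_def]
    rw [h]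
    refine pr_congr fun ω => ?_
    constructor
    · rintro ⟨h1, -⟩; exact h1
    · rintro ⟨h1, h2⟩; exact ⟨⟨h1, h2⟩, h1⟩
  have hpwe : ∀ w, pw w * e w = pe w := by
    intro w
    rcases eq_or_lt_of_le (hpw_nonneg w) with h0 | h0
    · have : pe w = 0 := le_antisymm (h0 ▸ hpe_le w) (hpe_nonneg w)
      simp only [he_def]
      simp [← h0, this]
    · simp only [he_def]
      field_simp
  -- on t1, the cell entropy equals pw * H2 (e w)
  have hcell1 : ∀ w ∈ t1, pw w * H2 (pt w / pw w) = pw w * H2 (e w) := by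
    rintro ⟨z, l⟩ hw
    rw [ht1, Finset.mem_filter] at hw
    obtain ⟨-, hz⟩ := hw
    cases z with
    | none => exact absurd rfl hz
    | some b =>
      rcases eq_or_lt_of_le (hpw_nonneg (some b, l)) with h0 | h0
      · rw [← h0]; ring
      have hpeb : pe (some b, l) =
          pr μ (fun ω => X ω = !b ∧ W ω = (some b, l)) := by
        refine pr_congr fun ω => ?_
        constructor
        · rintro ⟨⟨-, hne⟩, heq⟩
          have hzb : Z ω = some b := congrArg Prod.fst heq
          refine ⟨?_, heq⟩
          rw [hzb] at hne
          cases hXb : X ω <;> cases b <;> simp_all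
        · rintro ⟨hxb, heq⟩
          have hzb : Z ω = some b := congrArg Prod.fst heq
          refine ⟨⟨by simp [hzb], ?_⟩, heq⟩
          rw [hzb, hxb]
          cases b <;> simp
      cases b
      · -- b = false : error event is X = true
        have : e (false, l) = pt (false, l) / pw (false, l) := by
          simp only [he_def]
          rw [hpeb]
          simp [hpt_def]
        rw [this]
      · -- b = true : error event is X = false
        have hps := pr_bool_split (μ := μ) hsum X W (some true, l)
        have : e (true, l) = 1 - pt (true, l) / pw (true, l) := by
          simp only [he_def]
          rw [hpeb]
          have hfe : pr μ (fun ω => X ω = !true ∧ W ω = (some true, l))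
              = pw (some true, l) - pt (some true, l) := by
            simp only [Bool.not_true]
            rw [hpw_def, hpt_def]
            dsimp only
            linarith [hps]
          rw [hfe, sub_div, div_self h0.ne']
        rw [this, H2_symm]
  -- Jensen on t1
  have hjen : ∑ w ∈ t1, pw w * H2 (e w) ≤ q * H2 (ε / q) := by
    have h₀ : ∀ w ∈ t1, 0 ≤ pw w / q := fun w _ => div_nonneg (hpw_nonneg w) hq.le
    have h₁ : ∑ w ∈ t1, pw w / q = 1 := by
      rw [← Finset.sum_div, hsum1, div_self hq.ne']
    have hmem : ∀ w ∈ t1, e w ∈ Set.Icc (0:ℝ) 1 := by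
      intro w _
      refine ⟨div_nonneg (hpe_nonneg w) (hpw_nonneg w), ?_⟩
      rcases eq_or_lt_of_le (hpw_nonneg w) with h0 | h0
      · simp only [he_def]; simp [← h0]
      · exact div_le_one_of_le₀ (hpe_le w) (hpw_nonneg w)
    have hj := concaveOn_H2.le_map_sum h₀ h₁ hmem
    simp only [smul_eq_mul] at hj
    have hpts : ∑ w ∈ t1, pw w / q * e w = ε / q := by
      have hc : ∀ w ∈ t1, pw w / q * e w = pe w / q := by
        intro w _
        rw [← hpwe w]
        ring
      rw [Finset.sum_congr rfl hc, ← Finset.sum_div, hesum]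
    rw [hpts] at hj
    have hlhs : ∑ w ∈ t1, pw w / q * H2 (e w) = (∑ w ∈ t1, pw w * H2 (e w)) / q := by
      rw [Finset.sum_div]
      exact Finset.sum_congr rfl fun w _ => by ring
    rw [hlhs, div_le_iff₀ hq] at hj
    exact hj.trans_eq (mul_comm _ _)
  rw [hCE, ← Finset.sum_filter_add_sum_filter_not Finset.univ
    (fun w : Option Bool × γ => w.1 = none)]
  have hb1 : ∑ w ∈ t1, pw w * H2 (pt w / pw w) ≤ q * H2 (ε / q) := by
    rw [Finset.sum_congr rfl hcell1]
    exact hjen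
  have := add_le_add hbound0 hb1
  linarith
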